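/- For every integer η ≥ 1 there exists a connected trivially perfect graph G (a connected graph with no induced subgraph isomorphic to P_4 or C_4) whose distance matrix has nullity exactly η. -/

import Mathlib

open SimpleGraph

/-- The distance matrix of a finite simple graph, over ℚ: the `(u,v)` entry is the
graph distance between `u` and `v`. -/
noncomputable def distMatrix {V : Type*} [Fintype V] (G : SimpleGraph V) : Matrix V V ℚ :=
  fun u v => (G.dist u v : ℚ)


set_option linter.unnecessarySeqFocus false

abbrev VT (η : ℕ) := Option (Fin (η+1) × Fin 5)

def Gstars (η : ℕ) : SimpleGraph (VT η) where
  Adj u v := match u, v with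
    | none, none => False
    | none, some _ => True
    | some _, none => True
    | some (c,i), some (d,j) => c = d ∧ ((i = 0 ∧ j ≠ 0) ∨ (j = 0 ∧ i ≠ 0))
  symm := by constructor; rintro (_|⟨c,i⟩) (_|⟨d,j⟩) h <;> simp_all <;> tauto
  loopless := by constructor; rintro (_|⟨c,i⟩) h <;> simp_all

lemma Gstars_adj_none_some (η : ℕ) (p : Fin (η+1) × Fin 5) : (Gstars η).Adj none (some p) := by
  trivial

lemma Gstars_adj_some_none (η : ℕ) (p : Fin (η+1) × Fin 5) : (Gstars η).Adj (some p) none := by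
  trivial

instance GstarsDec (η : ℕ) : DecidableRel (Gstars η).Adj := fun u v =>
  match u, v with
  | none, none => Decidable.isFalse (fun h => h)
  | none, some _ => Decidable.isTrue trivial
  | some _, none => Decidable.isTrue trivial
  | some (c,i), some (d,j) =>
      inferInstanceAs (Decidable (c = d ∧ ((i = 0 ∧ j ≠ 0) ∨ (j = 0 ∧ i ≠ 0))))

lemma Gstars_adj_some_some (η : ℕ) (c d : Fin (η+1)) (i j : Fin 5) :
    (Gstars η).Adj (some (c,i)) (some (d,j)) ↔
      c = d ∧ ((i = 0 ∧ j ≠ 0) ∨ (j = 0 ∧ i ≠ 0)) := Iff.rfl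

lemma Gstars_connected (η : ℕ) : (Gstars η).Connected := by
  rw [connected_iff]
  refine ⟨?_, ⟨none⟩⟩
  have key : ∀ w : VT η, (Gstars η).Reachable none w := by
    rintro (_|p)
    · exact Reachable.refl _
    · exact (Gstars_adj_none_some η p).reachable
  exact fun u v => (key u).symm.trans (key v)

-- a vertex with a non-neighbor (other than itself) is not none
lemma ne_none_of_not_adj {η : ℕ} {u v : VT η} (h : ¬ (Gstars η).Adj u v) (hne : u ≠ v) :
    u ≠ none := by
  rintro rfl
  rcases v with _|p
  · exact hne rfl
  · exact h (Gstars_adj_none_some η p)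

lemma no_p4 (η : ℕ) : ¬ Nonempty (pathGraph 4 ↪g Gstars η) := by
  rintro ⟨f⟩
  have hadj : ∀ a b : Fin 4, (pathGraph 4).Adj a b → (Gstars η).Adj (f a) (f b) :=
    fun a b h => f.map_adj_iff.mpr h
  have hnadj : ∀ a b : Fin 4, ¬ (pathGraph 4).Adj a b → ¬ (Gstars η).Adj (f a) (f b) :=
    fun a b h h' => h (f.map_adj_iff.mp h')
  have hne : ∀ a b : Fin 4, a ≠ b → f a ≠ f b := fun a b h h' => h (f.injective h')
  have h01 := hadj 0 1 (by rw [pathGraph_adj]; decide)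
  have h12 := hadj 1 2 (by rw [pathGraph_adj]; decide)
  have h23 := hadj 2 3 (by rw [pathGraph_adj]; decide)
  have h02 := hnadj 0 2 (by rw [pathGraph_adj]; decide)
  have h13 := hnadj 1 3 (by rw [pathGraph_adj]; decide)
  -- all vertices are `some`
  have hn0 : f 0 ≠ none := ne_none_of_not_adj h02 (hne 0 2 (by decide))
  have hn2 : f 2 ≠ none := ne_none_of_not_adj (fun h => h02 h.symm) (hne 2 0 (by decide)).symm.symm
  have hn1 : f 1 ≠ none := ne_none_of_not_adj h13 (hne 1 3 (by decide))
  have hn3 : f 3 ≠ none := ne_none_of_not_adj (fun h => h13 h.symm) (hne 3 1 (by decide)).symm.symm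
  obtain ⟨⟨c0, i0⟩, e0⟩ := Option.ne_none_iff_exists'.mp hn0
  obtain ⟨⟨c1, i1⟩, e1⟩ := Option.ne_none_iff_exists'.mp hn1
  obtain ⟨⟨c2, i2⟩, e2⟩ := Option.ne_none_iff_exists'.mp hn2
  obtain ⟨⟨c3, i3⟩, e3⟩ := Option.ne_none_iff_exists'.mp hn3
  rw [e0, e1] at h01; rw [e1, e2] at h12; rw [e2, e3] at h23
  rw [e0, e2] at h02; rw [e1, e3] at h13
  rw [Gstars_adj_some_some] at h01 h12 h23
  rw [Gstars_adj_some_some] at h02 h13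
  obtain ⟨hc01, hi01⟩ := h01
  obtain ⟨hc12, hi12⟩ := h12
  obtain ⟨hc23, hi23⟩ := h23
  have hc02 : c0 = c2 := hc01.trans hc12
  have hc13 : c1 = c3 := hc12.trans hc23
  rcases hi01 with ⟨hi0, hi1⟩ | ⟨hi1, hi0⟩
  · -- i0 = 0, i1 ≠ 0; then from h12, i2 = 0, so f 0 = f 2
    have hi2 : i2 = 0 := by
      rcases hi12 with ⟨h, _⟩ | ⟨h, _⟩
      · exact absurd h hi1
      · exact h
    exact hne 0 2 (by decide) (by rw [e0, e2, hi0, hi2, hc02])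
  · -- i1 = 0; from h23 chain, i3 must be ≠ 0 (else f1 = f3), but then Adj f1 f3
    by_cases hi3 : i3 = 0
    · exact hne 1 3 (by decide) (by rw [e1, e3, hi1, hi3, hc13])
    · exact h13 ⟨hc13, Or.inl ⟨hi1, hi3⟩⟩

lemma no_c4 (η : ℕ) : ¬ Nonempty (cycleGraph 4 ↪g Gstars η) := by
  rintro ⟨f⟩
  have hadj : ∀ a b : Fin 4, (cycleGraph 4).Adj a b → (Gstars η).Adj (f a) (f b) :=
    fun a b h => f.map_adj_iff.mpr h
  have hnadj : ∀ a b : Fin 4, ¬ (cycleGraph 4).Adj a b → ¬ (Gstars η).Adj (f a) (f b) :=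
    fun a b h h' => h (f.map_adj_iff.mp h')
  have hne : ∀ a b : Fin 4, a ≠ b → f a ≠ f b := fun a b h h' => h (f.injective h')
  have h01 := hadj 0 1 (by rw [cycleGraph_adj]; decide)
  have h12 := hadj 1 2 (by rw [cycleGraph_adj]; decide)
  have h23 := hadj 2 3 (by rw [cycleGraph_adj]; decide)
  have h30 := hadj 3 0 (by rw [cycleGraph_adj]; decide)
  have h02 := hnadj 0 2 (by rw [cycleGraph_adj]; decide)
  have h13 := hnadj 1 3 (by rw [cycleGraph_adj]; decide)
  have hn0 : f 0 ≠ none := ne_none_of_not_adj h02 (hne 0 2 (by decide))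
  have hn2 : f 2 ≠ none := fun h => (ne_none_of_not_adj (fun h' => h02 ((Gstars η).adj_symm h')) (hne 2 0 (by decide))) h
  have hn1 : f 1 ≠ none := ne_none_of_not_adj h13 (hne 1 3 (by decide))
  have hn3 : f 3 ≠ none := fun h => (ne_none_of_not_adj (fun h' => h13 ((Gstars η).adj_symm h')) (hne 3 1 (by decide))) h
  obtain ⟨⟨c0, i0⟩, e0⟩ := Option.ne_none_iff_exists'.mp hn0
  obtain ⟨⟨c1, i1⟩, e1⟩ := Option.ne_none_iff_exists'.mp hn1
  obtain ⟨⟨c2, i2⟩, e2⟩ := Option.ne_none_iff_exists'.mp hn2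
  obtain ⟨⟨c3, i3⟩, e3⟩ := Option.ne_none_iff_exists'.mp hn3
  rw [e0, e1] at h01; rw [e1, e2] at h12; rw [e2, e3] at h23; rw [e3, e0] at h30
  rw [e0, e2] at h02; rw [e1, e3] at h13
  rw [Gstars_adj_some_some] at h01 h12 h23 h30
  rw [Gstars_adj_some_some] at h02 h13
  have hc02 : c0 = c2 := h01.1.trans h12.1
  have hc13 : c1 = c3 := h12.1.trans h23.1
  rcases h01.2 with ⟨hi0, _⟩ | ⟨hi1, _⟩
  · -- i0 = 0 : then i2 = 0 (else adj 0 2), so f0 = f2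
    by_cases hi2 : i2 = 0
    · exact hne 0 2 (by decide) (by rw [e0, e2, hi0, hi2, hc02])
    · exact h02 ⟨hc02, Or.inl ⟨hi0, hi2⟩⟩
  · -- i1 = 0
    by_cases hi3 : i3 = 0
    · exact hne 1 3 (by decide) (by rw [e1, e3, hi1, hi3, hc13])
    · exact h13 ⟨hc13, Or.inl ⟨hi1, hi3⟩⟩


lemma Gstars_dist (η : ℕ) (u v : VT η) (h : u ≠ v) :
    (Gstars η).dist u v = if (Gstars η).Adj u v then 1 else 2 := by
  split_ifs with ha
  · exact dist_eq_one_iff_adj.mpr ha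
  · -- u v both `some`
    rcases u with _|p
    · rcases v with _|q
      · exact absurd rfl h
      · exact absurd (Gstars_adj_none_some η q) ha
    · rcases v with _|q
      · exact absurd (Gstars_adj_some_none η p) ha
      · have h2 : (Gstars η).dist (some p) (some q) ≤ 2 := by
          simpa using dist_le
            (Walk.cons (Gstars_adj_some_none η p) (Walk.cons (Gstars_adj_none_some η q) Walk.nil))
        have h0 : 0 < (Gstars η).dist (some p) (some q) := by
          have hr : (Gstars η).Reachable (some p) (some q) :=
            ⟨Walk.cons (Gstars_adj_some_none η p) (Walk.cons (Gstars_adj_none_some η q) Walk.nil)⟩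
          exact hr.pos_dist_of_ne h
        have h1 : (Gstars η).dist (some p) (some q) ≠ 1 := fun hh =>
          ha (dist_eq_one_iff_adj.mp hh)
        omega

lemma D_entry (η : ℕ) (u v : VT η) : distMatrix (Gstars η) u v
    = 2 - (if u = v then 2 else 0) - (if (Gstars η).Adj u v then 1 else 0) := by
  by_cases h : u = v
  · subst h
    simp [distMatrix, (Gstars η).irrefl]
  · rw [distMatrix, Gstars_dist η u v h]
    split_ifs with ha <;> simp [h] <;> norm_num

section Kernel

variable {η : ℕ}

lemma row_eq (x : VT η → ℚ) (v : VT η) :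
    (distMatrix (Gstars η)).mulVec x v
      = 2 * (∑ w, x w) - 2 * x v - (∑ w, if (Gstars η).Adj v w then x w else 0) := by
  calc (distMatrix (Gstars η)).mulVec x v
      = ∑ w, (2 - (if v = w then 2 else 0) - (if (Gstars η).Adj v w then 1 else 0)) * x w := by
        rw [Matrix.mulVec, dotProduct]
        exact Finset.sum_congr rfl fun w _ => by rw [D_entry]
    _ = (∑ w, 2 * x w) - (∑ w, if v = w then 2 * x w else 0)
          - (∑ w, if (Gstars η).Adj v w then x w else 0) := by
        rw [← Finset.sum_sub_distrib, ← Finset.sum_sub_distrib]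
        exact Finset.sum_congr rfl fun w _ => by split_ifs <;> ring
    _ = 2 * (∑ w, x w) - 2 * x v - (∑ w, if (Gstars η).Adj v w then x w else 0) := by
        rw [← Finset.mul_sum, Finset.sum_ite_eq]
        simp

lemma total_sum (x : VT η → ℚ) :
    (∑ w, x w) = x none + ∑ c, ∑ i, x (some (c, i)) := by
  rw [Fintype.sum_option, Fintype.sum_prod_type]

lemma nbr_none (x : VT η → ℚ) :
    (∑ w, if (Gstars η).Adj none w then x w else 0) = ∑ c, ∑ i, x (some (c, i)) := by
  rw [Fintype.sum_option]
  simp only [(Gstars η).irrefl, if_false, zero_add]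
  rw [Fintype.sum_prod_type]
  exact Finset.sum_congr rfl fun c _ => Finset.sum_congr rfl fun i _ => by
    rw [if_pos (Gstars_adj_none_some η (c, i))]

lemma adj_center_iff (c d : Fin (η+1)) (j : Fin 5) :
    (Gstars η).Adj (some (c, 0)) (some (d, j)) ↔ (c = d ∧ j ≠ 0) := by
  constructor
  · rintro ⟨rfl, ⟨_, hj⟩ | ⟨hj, h0⟩⟩
    · exact ⟨rfl, hj⟩
    · exact absurd rfl h0
  · rintro ⟨rfl, hj⟩
    exact ⟨rfl, Or.inl ⟨rfl, hj⟩⟩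

lemma adj_leaf_iff (c d : Fin (η+1)) (i j : Fin 5) (hi : i ≠ 0) :
    (Gstars η).Adj (some (c, i)) (some (d, j)) ↔ (c = d ∧ j = 0) := by
  constructor
  · rintro ⟨rfl, ⟨h0, _⟩ | ⟨hj, _⟩⟩
    · exact absurd h0 hi
    · exact ⟨rfl, hj⟩
  · rintro ⟨rfl, rfl⟩
    exact ⟨rfl, Or.inr ⟨rfl, hi⟩⟩

lemma nbr_center (x : VT η → ℚ) (c : Fin (η+1)) :
    (∑ w, if (Gstars η).Adj (some (c, 0)) w then x w else 0)
      = x none + ((∑ i, x (some (c, i))) - x (some (c, 0))) := by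
  rw [Fintype.sum_option]
  rw [if_pos (Gstars_adj_some_none η (c, 0))]
  congr 1
  rw [Fintype.sum_prod_type]
  have : ∀ d : Fin (η+1), (∑ j, if (Gstars η).Adj (some (c, 0)) (some (d, j)) then x (some (d, j)) else 0)
      = if c = d then ((∑ i, x (some (d, i))) - x (some (d, 0))) else 0 := by
    intro d
    by_cases hcd : c = d
    · subst hcd
      rw [if_pos rfl]
      simp only [adj_center_iff, true_and]
      rw [Fin.sum_univ_five, Fin.sum_univ_five]
      simp only [Fin.reduceEq, reduceIte, ne_eq, not_false_eq_true, not_true_eq_false,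
        if_true, if_false]
      ring
    · rw [if_neg hcd]
      refine Finset.sum_eq_zero fun j _ => ?_
      rw [if_neg]
      rw [adj_center_iff]
      tauto
  rw [Finset.sum_congr rfl fun d _ => this d, Finset.sum_ite_eq]
  simp

lemma nbr_leaf (x : VT η → ℚ) (c : Fin (η+1)) (i : Fin 5) (hi : i ≠ 0) :
    (∑ w, if (Gstars η).Adj (some (c, i)) w then x w else 0)
      = x none + x (some (c, 0)) := by
  rw [Fintype.sum_option]
  rw [if_pos (Gstars_adj_some_none η (c, i))]
  congr 1
  rw [Fintype.sum_prod_type]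
  have : ∀ d : Fin (η+1), (∑ j, if (Gstars η).Adj (some (c, i)) (some (d, j)) then x (some (d, j)) else 0)
      = if c = d then x (some (d, 0)) else 0 := by
    intro d
    by_cases hcd : c = d
    · subst hcd
      rw [if_pos rfl]
      simp only [adj_leaf_iff c c _ _ hi, true_and]
      rw [Fin.sum_univ_five]
      simp only [Fin.reduceEq, reduceIte, ne_eq, not_false_eq_true, not_true_eq_false,
        if_true, if_false]
      ring
    · rw [if_neg hcd]
      refine Finset.sum_eq_zero fun j _ => ?_
      rw [if_neg]
      rw [adj_leaf_iff c d _ _ hi]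
      tauto
  rw [Finset.sum_congr rfl fun d _ => this d, Finset.sum_ite_eq]
  simp

end Kernel

section Kernel2

variable {η : ℕ}

/-- characterization of the kernel of the distance matrix -/
lemma ker_iff (x : VT η → ℚ) :
    (distMatrix (Gstars η)).mulVec x = 0 ↔
      (x none = 0 ∧ (∀ c : Fin (η+1), ∀ i : Fin 5, i ≠ 0 →
          x (some (c, i)) = -(x (some (c, 0))) / 2) ∧
        (∑ c, x (some (c, 0))) = 0) := by
  constructor
  · intro hx
    have hv : ∀ v, (distMatrix (Gstars η)).mulVec x v = 0 := fun v => congrFun hx v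
    have hS := total_sum x
    -- row none gives  T = 0
    have hT : (∑ c, ∑ i, x (some (c, i))) = 0 := by
      have h := hv none
      rw [row_eq, nbr_none] at h
      rw [hS] at h
      linarith
    -- leaf rows
    have hleaf : ∀ c : Fin (η+1), ∀ i : Fin 5, i ≠ 0 →
        x (some (c, i)) = (x none - x (some (c, 0))) / 2 := by
      intro c i hi
      have h := hv (some (c, i))
      rw [row_eq, nbr_leaf x c i hi] at h
      rw [hS, hT] at h
      linarith
    -- per-copy sums
    have hTc : ∀ c : Fin (η+1), (∑ i, x (some (c, i))) = 2 * x none - x (some (c, 0)) := by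
      intro c
      rw [Fin.sum_univ_five, hleaf c 1 (by decide), hleaf c 2 (by decide),
        hleaf c 3 (by decide), hleaf c 4 (by decide)]
      ring
    -- center row forces x none = 0
    have hn : x none = 0 := by
      have h := hv (some ((0 : Fin (η+1)), 0))
      rw [row_eq, nbr_center] at h
      rw [hS, hT, hTc 0] at h
      linarith
    refine ⟨hn, fun c i hi => by rw [hleaf c i hi, hn]; ring, ?_⟩
    have : (∑ c, ∑ i, x (some (c, i))) = ∑ c, -(x (some (c, 0))) := by
      refine Finset.sum_congr rfl fun c _ => ?_
      rw [hTc c, hn]; ring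
    rw [this, Finset.sum_neg_distrib] at hT
    linarith
  · rintro ⟨hn, hleaf, hsum⟩
    have hTc : ∀ c : Fin (η+1), (∑ i, x (some (c, i))) = -(x (some (c, 0))) := by
      intro c
      rw [Fin.sum_univ_five, hleaf c 1 (by decide), hleaf c 2 (by decide),
        hleaf c 3 (by decide), hleaf c 4 (by decide)]
      ring
    have hT : (∑ c, ∑ i, x (some (c, i))) = 0 := by
      rw [Finset.sum_congr rfl fun c _ => hTc c, Finset.sum_neg_distrib, hsum, neg_zero]
    have hS : (∑ w, x w) = 0 := by
      rw [total_sum, hn, hT, add_zero]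
    funext v
    rcases v with _ | ⟨c, i⟩
    · rw [row_eq, nbr_none, hS, hT, hn]
      simp
    · by_cases hi : i = 0
      · subst hi
        rw [row_eq, nbr_center, hS, hTc c, hn]
        simp
        ring
      · rw [row_eq, nbr_leaf x c i hi, hS, hn, hleaf c i hi]
        simp
        ring

end Kernel2

section Finrank

variable (η : ℕ)

noncomputable def fromPi : (Fin (η+1) → ℚ) →ₗ[ℚ] (VT η → ℚ) where
  toFun a := fun v => v.elim 0 (fun p => if p.2 = 0 then a p.1 else -(a p.1)/2)
  map_add' a b := by
    funext v
    rcases v with _ | ⟨c, i⟩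
    · simp
    · by_cases hi : i = 0 <;> simp [hi] <;> ring
  map_smul' r a := by
    funext v
    rcases v with _ | ⟨c, i⟩
    · simp
    · by_cases hi : i = 0 <;> simp [hi] <;> ring

noncomputable def toPi : (VT η → ℚ) →ₗ[ℚ] (Fin (η+1) → ℚ) :=
  LinearMap.funLeft ℚ ℚ (fun c => some (c, 0))

noncomputable def sumLM : (Fin (η+1) → ℚ) →ₗ[ℚ] ℚ where
  toFun a := ∑ c, a c
  map_add' a b := by simp [Finset.sum_add_distrib]
  map_smul' r a := by simp [Finset.mul_sum]

lemma finrank_ker_sumLM : Module.finrank ℚ (LinearMap.ker (sumLM η)) = η := by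
  have h1 := LinearMap.finrank_range_add_finrank_ker (sumLM η)
  have hsurj : LinearMap.range (sumLM η) = ⊤ := by
    rw [LinearMap.range_eq_top]
    intro q
    refine ⟨Pi.single 0 q, ?_⟩
    simp [sumLM, Finset.sum_pi_single']
  rw [hsurj] at h1
  rw [finrank_top, Module.finrank_self, Module.finrank_pi, Fintype.card_fin] at h1
  omega

lemma memK (x : VT η → ℚ) :
    x ∈ LinearMap.ker (distMatrix (Gstars η)).mulVecLin
      ↔ (distMatrix (Gstars η)).mulVec x = 0 := by
  rw [LinearMap.mem_ker, Matrix.mulVecLin_apply]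

noncomputable def Fmap :
    LinearMap.ker (distMatrix (Gstars η)).mulVecLin →ₗ[ℚ] LinearMap.ker (sumLM η) :=
  LinearMap.codRestrict _ ((toPi η) ∘ₗ (LinearMap.ker (distMatrix (Gstars η)).mulVecLin).subtype)
    (by
      rintro ⟨x, hx⟩
      obtain ⟨-, -, hsum⟩ := (ker_iff x).mp ((memK η x).mp hx)
      simpa [sumLM, toPi, LinearMap.funLeft] using hsum)

noncomputable def Bmap :
    LinearMap.ker (sumLM η) →ₗ[ℚ] LinearMap.ker (distMatrix (Gstars η)).mulVecLin :=
  LinearMap.codRestrict _ ((fromPi η) ∘ₗ (LinearMap.ker (sumLM η)).subtype)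
    (by
      rintro ⟨a, ha⟩
      rw [LinearMap.mem_ker] at ha
      refine (memK η _).mpr ((ker_iff _).mpr ⟨rfl, ?_, ?_⟩)
      · intro c i hi
        simp [fromPi, hi]
      · exact ha)

lemma finrank_ker_dist :
    Module.finrank ℚ (LinearMap.ker (distMatrix (Gstars η)).mulVecLin) = η := by
  have hFB : (Fmap η).comp (Bmap η) = LinearMap.id := by
    apply LinearMap.ext
    rintro ⟨a, ha⟩
    apply Subtype.ext
    funext c
    simp [Fmap, Bmap, toPi, fromPi, LinearMap.funLeft]
  have hBF : (Bmap η).comp (Fmap η) = LinearMap.id := by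
    apply LinearMap.ext
    rintro ⟨x, hx⟩
    apply Subtype.ext
    obtain ⟨hn, hleaf, -⟩ := (ker_iff x).mp ((memK η x).mp hx)
    funext v
    rcases v with _ | ⟨c, i⟩
    · simpa [Fmap, Bmap, toPi, fromPi] using hn.symm
    · by_cases hi : i = 0
      · subst hi
        simp [Fmap, Bmap, toPi, fromPi, LinearMap.funLeft]
      · simpa [Fmap, Bmap, toPi, fromPi, LinearMap.funLeft, hi] using (hleaf c i hi).symm
  have equiv : LinearMap.ker (distMatrix (Gstars η)).mulVecLin ≃ₗ[ℚ] LinearMap.ker (sumLM η) :=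
    LinearEquiv.ofLinear (Fmap η) (Bmap η) hFB hBF
  rw [equiv.finrank_eq, finrank_ker_sumLM]

lemma rank_dist : (distMatrix (Gstars η)).rank + η = 5 * η + 6 := by
  have h := LinearMap.finrank_range_add_finrank_ker ((distMatrix (Gstars η)).mulVecLin)
  have hr : (distMatrix (Gstars η)).rank
      = Module.finrank ℚ (LinearMap.range (distMatrix (Gstars η)).mulVecLin) := rfl
  rw [finrank_ker_dist, Module.finrank_pi] at h
  have hcard : Fintype.card (VT η) = 5 * η + 6 := by
    simp [Fintype.card_option, Fintype.card_prod]
    ring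
  rw [hcard] at h
  omega

end Finrank

lemma iso_dist_le {α β : Type*} {A : SimpleGraph α} {B : SimpleGraph β} (ψ : A ≃g B)
    (u v : α) : B.dist (ψ u) (ψ v) ≤ A.dist u v := by
  by_cases h : A.Reachable u v
  · obtain ⟨w, hw⟩ := h.exists_walk_length_eq_dist
    calc B.dist (ψ u) (ψ v) ≤ (w.map ψ.toHom).length := dist_le _
      _ = A.dist u v := by rw [Walk.length_map, hw]
  · have h' : ¬ B.Reachable (ψ u) (ψ v) := by
      intro hr
      obtain ⟨w⟩ := hr
      have : A.Reachable (ψ.symm (ψ u)) (ψ.symm (ψ v)) := ⟨w.map ψ.symm.toHom⟩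
      simp only [RelIso.symm_apply_apply] at this
      exact h this
    rw [dist_eq_zero_iff_eq_or_not_reachable.mpr (Or.inr h),
        dist_eq_zero_iff_eq_or_not_reachable.mpr (Or.inr h')]

lemma iso_dist {α β : Type*} {A : SimpleGraph α} {B : SimpleGraph β} (ψ : A ≃g B)
    (u v : α) : A.dist u v = B.dist (ψ u) (ψ v) := by
  refine le_antisymm ?_ (iso_dist_le ψ u v)
  have := iso_dist_le ψ.symm (ψ u) (ψ v)
  simpa using this

/-- For every integer η ≥ 1 there exists a connected trivially perfect graph (a connected
graph with no induced P₄ and no induced C₄) whose distance matrix has nullity exactly η. -/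
theorem exists_triviallyPerfect_with_nullity (η : ℕ) (hη : 1 ≤ η) :
    ∃ (n : ℕ) (G : SimpleGraph (Fin n)),
      G.Connected ∧
      (¬ Nonempty (pathGraph 4 ↪g G)) ∧
      (¬ Nonempty (cycleGraph 4 ↪g G)) ∧
      n - (distMatrix G).rank = η := by
  refine ⟨5 * η + 6, ?_, ?_⟩
  · -- graph via equivalence
    have hn : (η + 1) * 5 + 1 = 5 * η + 6 := by ring
    exact (Gstars η).comap
      ((((Equiv.optionCongr finProdFinEquiv).trans
        (finSuccEquiv ((η+1)*5)).symm).trans (finCongr hn)).symm.toEmbedding)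
  · set e : VT η ≃ Fin (5 * η + 6) :=
      ((Equiv.optionCongr finProdFinEquiv).trans
        (finSuccEquiv ((η+1)*5)).symm).trans (finCongr (by ring : (η + 1) * 5 + 1 = 5 * η + 6))
      with he
    set Gn := (Gstars η).comap (e.symm.toEmbedding) with hGn
    have iso : Gn ≃g Gstars η := SimpleGraph.Iso.comap e.symm (Gstars η)
    have hd : ∀ u v, Gn.dist u v = (Gstars η).dist (e.symm u) (e.symm v) := by
      intro u v
      have h := iso_dist (SimpleGraph.Iso.comap e.symm (Gstars η)) u v
      simp only [Iso.comap_apply] at h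
      exact h
    refine ⟨?_, ?_, ?_, ?_⟩
    · exact iso.connected_iff.mpr (Gstars_connected η)
    · rintro ⟨f⟩
      exact no_p4 η ⟨iso.toEmbedding.comp f⟩
    · rintro ⟨f⟩
      exact no_c4 η ⟨iso.toEmbedding.comp f⟩
    · have hsub : distMatrix Gn = (distMatrix (Gstars η)).submatrix e.symm e.symm := by
        funext u v
        simp only [distMatrix, Matrix.submatrix_apply, hd]
      rw [hsub, Matrix.rank_submatrix]
      have := rank_dist η
      omega
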